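/- arXiv:1005.3178 — 3 statements merged into one kernel-verified Lean document; each statement's English description precedes it below -/
import Mathlib

section
/- Let (A,j)_K be a C*-net bundle over a pathwise connected poset and fix o ∈ K. The assignment sending a representation (π,U) of (A,j)_K to the covariant representation (π_o, U_*) of the holonomy dynamical system (A_o, π₁ᵒ(K), j_*), where U_{*,[p]} := U_p for loops p at o, induces a bijection between unitary equivalence classes of representations of (A,j)_K and unitary equivalence classes of covariant representations of (A_o, π₁ᵒ(K), j_*). -/
noncomputable section

universe u v w u' v' w' u'' v'' w''

namespace AQFT

/-! ### Simplices and paths in a poset -/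

structure Simplex1 (K : Type u) [PartialOrder K] : Type u where
  supp : K
  d0 : K
  d1 : K
  le0 : d0 ≤ supp
  le1 : d1 ≤ supp

namespace Simplex1

variable {K : Type u} [PartialOrder K]

def op (s : Simplex1 K) : Simplex1 K := ⟨s.supp, s.d1, s.d0, s.le1, s.le0⟩

def deg (a : K) : Simplex1 K := ⟨a, a, a, le_rfl, le_rfl⟩

def map {L : Type u'} [PartialOrder L] (f : K →o L) (s : Simplex1 K) : Simplex1 L :=
  ⟨f s.supp, f s.d0, f s.d1, f.monotone s.le0, f.monotone s.le1⟩

end Simplex1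

structure Simplex2 (K : Type u) [PartialOrder K] : Type u where
  supp : K
  d0 : Simplex1 K
  d1 : Simplex1 K
  d2 : Simplex1 K
  le0 : d0.supp ≤ supp
  le1 : d1.supp ≤ supp
  le2 : d2.supp ≤ supp
  h00 : d0.d0 = d1.d0
  h11 : d1.d1 = d2.d1
  h10 : d0.d1 = d2.d0

inductive SPath (K : Type u) [PartialOrder K] : K → K → Type u
  | nil (a : K) : SPath K a a
  | cons {a b c : K} (p : SPath K a b) (s : Simplex1 K) (h1 : s.d1 = b) (h0 : s.d0 = c) :
      SPath K a c

namespace SPath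

variable {K : Type u} [PartialOrder K]

/-- The path consisting of a single 1-simplex. -/
def single {a b : K} (s : Simplex1 K) (h1 : s.d1 = a) (h0 : s.d0 = b) : SPath K a b :=
  .cons (.nil a) s h1 h0

/-- Composition of paths: first traverse `p`, then `q`. -/
def comp {a b : K} (p : SPath K a b) : {c : K} → SPath K b c → SPath K a c
  | _, .nil _ => p
  | _, .cons q s h1 h0 => .cons (p.comp q) s h1 h0

/-- The opposite (reverse) of a path. -/
def reverse {a : K} : {b : K} → SPath K a b → SPath K b a
  | _, .nil _ => .nil a
  | _, .cons p s h1 h0 => (single s.op h0 h1).comp p.reverse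

@[simp] theorem comp_nil {a b : K} (p : SPath K a b) : p.comp (.nil b) = p := rfl

@[simp] theorem nil_comp {a b : K} (p : SPath K a b) : (SPath.nil a).comp p = p := by
  induction p with
  | nil => rfl
  | cons p s h1 h0 ih =>
      show SPath.cons ((SPath.nil _).comp p) s h1 h0 = _
      rw [ih]

theorem comp_assoc {a b c d : K} (p : SPath K a b) (q : SPath K b c) (r : SPath K c d) :
    (p.comp q).comp r = p.comp (q.comp r) := by
  induction r with
  | nil => rfl
  | cons r s h1 h0 ih =>
      show SPath.cons ((p.comp q).comp r) s h1 h0 = SPath.cons (p.comp (q.comp r)) s h1 h0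
      rw [ih]

/-- All 1-simplices of the path have support `≤ o`. -/
def SuppLE (o : K) {a : K} : {b : K} → SPath K a b → Prop
  | _, .nil _ => True
  | _, .cons p s _ _ => SuppLE o p ∧ s.supp ≤ o

/-- All supports and faces of the path belong to `P`. -/
def MemAll (P : Set K) {a : K} : {b : K} → SPath K a b → Prop
  | _, .nil _ => True
  | _, .cons p s _ _ => MemAll P p ∧ s.supp ∈ P ∧ s.d0 ∈ P ∧ s.d1 ∈ P

theorem SuppLE.comp {o : K} {a b c : K} {p : SPath K a b} {q : SPath K b c}
    (hp : SuppLE o p) (hq : SuppLE o q) : SuppLE o (p.comp q) := by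
  induction q with
  | nil => exact hp
  | cons q s h1 h0 ih => exact ⟨ih hq.1, hq.2⟩

theorem SuppLE.reverse {o : K} {a b : K} {p : SPath K a b} (hp : SuppLE o p) :
    SuppLE o p.reverse := by
  induction p with
  | nil => trivial
  | cons p s h1 h0 ih => exact SuppLE.comp ⟨trivial, hp.2⟩ (ih hp.1)

/-- Mapping paths along a monotone map. -/
def map {L : Type u'} [PartialOrder L] (f : K →o L) {a : K} :
    {b : K} → SPath K a b → SPath L (f a) (f b)
  | _, .nil _ => .nil (f a)
  | _, .cons p s h1 h0 => .cons (map f p) (s.map f) (congrArg f h1) (congrArg f h0)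

/-- The path of the nerve 1-simplex associated with an inclusion `o ≤ a`. -/
def nervePath {o a : K} (h : o ≤ a) : SPath K o a :=
  single ⟨a, a, o, le_rfl, h⟩ rfl rfl

/-! ### Homotopy of paths -/

inductive Homotopic : {a b : K} → SPath K a b → SPath K a b → Prop
  | refl {a b : K} (p : SPath K a b) : Homotopic p p
  | symm {a b : K} {p q : SPath K a b} : Homotopic p q → Homotopic q p
  | trans {a b : K} {p q r : SPath K a b} : Homotopic p q → Homotopic q r → Homotopic p r
  | comp_congr {a b c : K} {p p' : SPath K a b} {q q' : SPath K b c} :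
      Homotopic p p' → Homotopic q q' → Homotopic (p.comp q) (p'.comp q')
  | degen {a : K} (s : Simplex1 K) (h0 : s.d0 = a) (h1 : s.d1 = a) (hs : s.supp = a) :
      Homotopic (SPath.nil a) (single s h1 h0)
  | triangle {a b : K} (c : Simplex2 K) (h1 : c.d2.d1 = a) (h0 : c.d0.d0 = b) :
      Homotopic ((single c.d2 h1 rfl).comp (single c.d0 c.h10 h0))
        (single c.d1 (c.h11.trans h1) (c.h00.symm.trans h0))

theorem single_comp_op {a b : K} (s : Simplex1 K) (h1 : s.d1 = a) (h0 : s.d0 = b) :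
    Homotopic ((single s h1 h0).comp (single s.op h0 h1)) (SPath.nil a) := by
  subst h1; subst h0
  have ht := Homotopic.triangle
    (⟨s.supp, s.op, Simplex1.deg s.d1, s, le_rfl, s.le1, le_rfl, rfl, rfl, rfl⟩ : Simplex2 K)
    rfl rfl
  have hd := Homotopic.degen (K := K) (Simplex1.deg s.d1) rfl rfl rfl
  exact ht.trans hd.symm

theorem comp_reverse_self {a b : K} (p : SPath K a b) :
    Homotopic (p.comp p.reverse) (SPath.nil a) := by
  induction p with
  | nil => exact .refl _
  | cons p s h1 h0 ih =>
      show Homotopic ((p.comp (single s h1 h0)).comp ((single s.op h0 h1).comp p.reverse)) _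
      rw [comp_assoc, ← comp_assoc (single s h1 h0)]
      have h2 : Homotopic (((single s h1 h0).comp (single s.op h0 h1)).comp p.reverse)
          p.reverse := by
        have h3 := Homotopic.comp_congr (single_comp_op s h1 h0) (Homotopic.refl p.reverse)
        rwa [nil_comp] at h3
      exact (Homotopic.comp_congr (Homotopic.refl p) h2).trans ih

theorem reverse_comp_self {a b : K} (p : SPath K a b) :
    Homotopic (p.reverse.comp p) (SPath.nil b) := by
  induction p with
  | nil => exact .refl _
  | cons p s h1 h0 ih =>
      show Homotopic (((single s.op h0 h1).comp p.reverse).comp (p.comp (single s h1 h0))) _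
      rw [comp_assoc, ← comp_assoc p.reverse]
      have h2 : Homotopic ((p.reverse.comp p).comp (single s h1 h0)) (single s h1 h0) := by
        have h3 := Homotopic.comp_congr ih (Homotopic.refl (single s h1 h0))
        rwa [nil_comp] at h3
      have h4 : Homotopic ((single s.op h0 h1).comp ((p.reverse.comp p).comp (single s h1 h0)))
          ((single s.op h0 h1).comp (single s h1 h0)) :=
        Homotopic.comp_congr (Homotopic.refl _) h2
      exact h4.trans (single_comp_op s.op h0 h1)

theorem Homotopic.reverse_congr {a b : K} {p q : SPath K a b} (h : Homotopic p q) :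
    Homotopic p.reverse q.reverse := by
  have e1 : Homotopic p.reverse (p.reverse.comp (q.comp q.reverse)) :=
    Homotopic.comp_congr (Homotopic.refl p.reverse) (comp_reverse_self q).symm
  have e2 : Homotopic (p.reverse.comp (q.comp q.reverse)) ((p.reverse.comp p).comp q.reverse) := by
    rw [comp_assoc]
    exact Homotopic.comp_congr (Homotopic.refl _)
      (Homotopic.comp_congr h.symm (Homotopic.refl _))
  have e3 : Homotopic ((p.reverse.comp p).comp q.reverse) q.reverse := by
    have h3 := Homotopic.comp_congr (reverse_comp_self p) (Homotopic.refl q.reverse)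
    rwa [nil_comp] at h3
  exact (e1.trans e2).trans e3

end SPath

/-! ### The fundamental group of a poset -/

instance homotopySetoid (K : Type u) [PartialOrder K] (o : K) : Setoid (SPath K o o) where
  r := SPath.Homotopic
  iseqv := ⟨fun p => .refl p, fun h => h.symm, fun h h' => h.trans h'⟩

def Pi1 (K : Type u) [PartialOrder K] (o : K) : Type u := Quotient (homotopySetoid K o)

namespace Pi1

variable {K : Type u} [PartialOrder K] {o : K}

def mk (p : SPath K o o) : Pi1 K o := Quotient.mk _ p

instance : One (Pi1 K o) := ⟨mk (SPath.nil o)⟩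

instance : Mul (Pi1 K o) :=
  ⟨Quotient.map₂ (fun p q => q.comp p)
    (fun _ _ hp _ _ hq => SPath.Homotopic.comp_congr hq hp)⟩

instance : Inv (Pi1 K o) :=
  ⟨Quotient.map SPath.reverse (fun _ _ h => h.reverse_congr)⟩

instance : Group (Pi1 K o) where
  mul_assoc x y z := by
    refine Quotient.inductionOn₃ x y z ?_
    intro p q r
    show mk (r.comp (q.comp p)) = mk ((r.comp q).comp p)
    rw [SPath.comp_assoc]
  one_mul x := Quotient.inductionOn x fun p => rfl
  mul_one x := Quotient.inductionOn x fun p => congrArg mk (SPath.nil_comp p)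
  inv_mul_cancel x := Quotient.inductionOn x fun p => Quotient.sound (SPath.comp_reverse_self p)

end Pi1

/-! ### Nets of C*-algebras over a poset -/

open scoped ComplexOrder

variable {K : Type u} [PartialOrder K]

structure CStarNet (K : Type u) [PartialOrder K] where
  fib : K → Type v
  [cstar : ∀ o, CStarAlgebra (fib o)]
  incl : ∀ ⦃a o : K⦄, a ≤ o → (fib a →⋆ₐ[ℂ] fib o)
  incl_injective : ∀ ⦃a o : K⦄ (h : a ≤ o), Function.Injective (incl h)
  incl_comp : ∀ ⦃e a o : K⦄ (h1 : e ≤ a) (h2 : a ≤ o) (x : fib e),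
      incl h2 (incl h1 x) = incl (h1.trans h2) x

attribute [instance] CStarNet.cstar

/-- A C*-net bundle: all the inclusion maps are isomorphisms. -/
def IsCStarNetBundle (N : CStarNet.{u, v} K) : Prop :=
  ∀ ⦃a o : K⦄ (h : a ≤ o), Function.Bijective (N.incl h)

/-- Morphisms of nets over (possibly) different posets, over the poset map `f`. -/
def IsNetMorphism {K : Type u} {S : Type u'} [PartialOrder K] [PartialOrder S]
    (N : CStarNet.{u, v} K) (M : CStarNet.{u', v'} S) (f : K →o S)
    (φ : ∀ o : K, N.fib o →⋆ₐ[ℂ] M.fib (f o)) : Prop :=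
  ∀ ⦃a o : K⦄ (h : a ≤ o) (x : N.fib a), φ o (N.incl h x) = M.incl (f.monotone h) (φ a x)

/-- Morphisms of nets over the same poset (over the identity of the poset). -/
def IsNetMorphismOver (N : CStarNet.{u, v} K) (M : CStarNet.{u, v'} K)
    (φ : ∀ o : K, N.fib o →⋆ₐ[ℂ] M.fib o) : Prop :=
  ∀ ⦃a o : K⦄ (h : a ≤ o) (x : N.fib a), φ o (N.incl h x) = M.incl h (φ a x)

namespace CStarNet

def fibCast (N : CStarNet.{u, v} K) {a b : K} (h : a = b) : N.fib a ≃⋆ₐ[ℂ] N.fib b := by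
  subst h; exact StarAlgEquiv.refl ℂ _

/-- The isomorphism determined by an inclusion map of a C*-net bundle. -/
def holEquiv (N : CStarNet.{u, v} K) (hN : IsCStarNetBundle N) ⦃a o : K⦄ (h : a ≤ o) :
    N.fib a ≃⋆ₐ[ℂ] N.fib o :=
  StarAlgEquiv.ofBijective (N.incl h) (hN h)

/-- The 1-cocycle `j_b` associated with a 1-simplex `b` of the poset. -/
def hol1 (N : CStarNet.{u, v} K) (hN : IsCStarNetBundle N) (s : Simplex1 K) :
    N.fib s.d1 ≃⋆ₐ[ℂ] N.fib s.d0 :=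
  (N.holEquiv hN s.le1).trans (N.holEquiv hN s.le0).symm

/-- The extension `j_p` of the 1-cocycle from 1-simplices to paths. -/
def holPath (N : CStarNet.{u, v} K) (hN : IsCStarNetBundle N) {a : K} :
    {b : K} → SPath K a b → (N.fib a ≃⋆ₐ[ℂ] N.fib b)
  | _, .nil _ => StarAlgEquiv.refl ℂ _
  | _, .cons p s h1 h0 =>
      (holPath N hN p).trans (((N.fibCast h1.symm).trans (N.hol1 hN s)).trans (N.fibCast h0))

end CStarNet

/-- A net is trivial if it is isomorphic to a constant net bundle. -/
def IsTrivialNet (N : CStarNet.{u, v} K) : Prop :=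
  ∀ o₀ : K, ∃ τ : ∀ a, N.fib a ≃⋆ₐ[ℂ] N.fib o₀,
    ∀ ⦃a o : K⦄ (h : a ≤ o) (x : N.fib a), τ o (N.incl h x) = τ a x

/-- `(NB, ε)` is an enveloping net bundle of the net `N`. -/
def IsEnvelope (N : CStarNet.{u, v} K) (NB : CStarNet.{u, max u v} K)
    (ε : ∀ o, N.fib o →⋆ₐ[ℂ] NB.fib o) : Prop :=
  IsCStarNetBundle NB ∧ IsNetMorphismOver N NB ε ∧
    ∀ (M : CStarNet.{u, max u v} K), IsCStarNetBundle M →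
      ∀ ψ : ∀ o, N.fib o →⋆ₐ[ℂ] M.fib o, IsNetMorphismOver N M ψ →
        ∃! ψu : ∀ o, NB.fib o →⋆ₐ[ℂ] M.fib o,
          IsNetMorphismOver NB M ψu ∧ ∀ o x, ψu o (ε o x) = ψ o x

/-- The net `N` is nondegenerate w.r.t. the enveloping net bundle `NB`. -/
def IsNondegenerate (NB : CStarNet.{u, v'} K) : Prop :=
  ∀ o : K, Nontrivial (NB.fib o)

/-! ### States -/

/-- A state on a unital C*-algebra. -/
structure CStarAlgState (A : Type v) [CStarAlgebra A] where
  lin : A →ₗ[ℂ] ℂ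
  map_one : lin 1 = 1
  pos : ∀ a : A, 0 ≤ lin (star a * a)

/-- A state on a net of C*-algebras. -/
structure NetState (N : CStarNet.{u, v} K) where
  st : ∀ o, CStarAlgState (N.fib o)
  compat : ∀ ⦃o a : K⦄ (h : o ≤ a) (x : N.fib o), (st a).lin (N.incl h x) = (st o).lin x

/-! ### Representations -/

structure NetRep (N : CStarNet.{u, v} K) where
  H : K → Type w
  [nacg : ∀ o, NormedAddCommGroup (H o)]
  [ips : ∀ o, InnerProductSpace ℂ (H o)]
  [cpl : ∀ o, CompleteSpace (H o)]
  rep : ∀ o, N.fib o →⋆ₐ[ℂ] (H o →L[ℂ] H o)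
  U : ∀ ⦃o a : K⦄, o ≤ a → (H o ≃ₗᵢ[ℂ] H a)
  intertwine : ∀ ⦃o a : K⦄ (h : o ≤ a) (x : N.fib o) (v : H o),
      U h (rep o x v) = rep a (N.incl h x) (U h v)
  U_comp : ∀ ⦃o a e : K⦄ (h1 : o ≤ a) (h2 : a ≤ e) (v : H o),
      U h2 (U h1 v) = U (h1.trans h2) v

attribute [instance] NetRep.nacg NetRep.ips NetRep.cpl

namespace NetRep

variable {N : CStarNet.{u, v} K}

def hCast (R : NetRep.{u, v, w} N) {a b : K} (h : a = b) : R.H a ≃ₗᵢ[ℂ] R.H b := by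
  subst h; exact LinearIsometryEquiv.refl ℂ _

/-- The unitary `U_b` associated with a 1-simplex `b`. -/
def U1 (R : NetRep.{u, v, w} N) (s : Simplex1 K) : R.H s.d1 ≃ₗᵢ[ℂ] R.H s.d0 :=
  (R.U s.le1).trans (R.U s.le0).symm

/-- The unitary `U_p` associated with a path `p`. -/
def Upath (R : NetRep.{u, v, w} N) {a : K} : {b : K} → SPath K a b → (R.H a ≃ₗᵢ[ℂ] R.H b)
  | _, .nil _ => LinearIsometryEquiv.refl ℂ _
  | _, .cons p s h1 h0 =>
      (Upath R p).trans (((R.hCast h1.symm).trans (R.U1 s)).trans (R.hCast h0))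

/-- A representation is faithful if all the `π_o` are injective. -/
def Faithful (R : NetRep.{u, v, w} N) : Prop := ∀ o, Function.Injective (R.rep o)

/-- A representation vanishes if all the `π_o` are zero. -/
def Vanishes (R : NetRep.{u, v, w} N) : Prop := ∀ (o) (x : N.fib o), R.rep o x = 0

/-- Quasi (topologically) trivial representation: the loop unitaries commute with the
representation of the corresponding fibre. -/
def QuasiTrivial (R : NetRep.{u, v, w} N) : Prop :=
  ∀ (o : K) (p : SPath K o o) (x : N.fib o) (v : R.H o),
    R.Upath p (R.rep o x v) = R.rep o x (R.Upath p v)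

/-- Unitary equivalence of representations. -/
def Equiv (R : NetRep.{u, v, w} N) (R' : NetRep.{u, v, w'} N) : Prop :=
  ∃ T : ∀ o, R.H o ≃ₗᵢ[ℂ] R'.H o,
    (∀ (o) (x : N.fib o) (v : R.H o), T o (R.rep o x v) = R'.rep o x (T o v)) ∧
    (∀ ⦃o a : K⦄ (h : o ≤ a) (v : R.H o), T a (R.U h v) = R'.U h (T o v))

end NetRep

/-- The representation of `N` obtained by composing a representation of `NB` with
a morphism `ε : N → NB` of nets over `K`. -/
def NetRep.ofEnvelope {N : CStarNet.{u, v} K} {NB : CStarNet.{u, v'} K}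
    (ε : ∀ o, N.fib o →⋆ₐ[ℂ] NB.fib o) (hε : IsNetMorphismOver N NB ε)
    (R : NetRep.{u, v', w} NB) : NetRep.{u, v, w} N where
  H := R.H
  rep o := (R.rep o).comp (ε o)
  U := R.U
  intertwine := by
    intro o a h x v
    show R.U h (R.rep o (ε o x) v) = R.rep a (ε a (N.incl h x)) (R.U h v)
    rw [hε h x]
    exact R.intertwine h (ε o x) v
  U_comp := R.U_comp

/-- Covariant representations of the holonomy dynamical system of a C*-net bundle,
with the action of the fundamental group presented at the level of loops. -/
structure CovRep (N : CStarNet.{u, v} K) (hN : IsCStarNetBundle N) (o : K) where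
  H : Type w
  [nacg : NormedAddCommGroup H]
  [ips : InnerProductSpace ℂ H]
  [cpl : CompleteSpace H]
  eta : N.fib o →⋆ₐ[ℂ] (H →L[ℂ] H)
  V : SPath K o o → (H ≃ₗᵢ[ℂ] H)
  V_hom : ∀ p q : SPath K o o, SPath.Homotopic p q → V p = V q
  V_mul : ∀ p q : SPath K o o, V (p.comp q) = (V p).trans (V q)
  cov : ∀ (p : SPath K o o) (x : N.fib o) (v : H),
      eta (N.holPath hN p x) (V p v) = V p (eta x v)

attribute [instance] CovRep.nacg CovRep.ips CovRep.cpl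

/-- Equivalence of covariant representations. -/
def CovRep.Equiv {N : CStarNet.{u, v} K} {hN : IsCStarNetBundle N} {o : K}
    (C : CovRep.{u, v, w} N hN o) (C' : CovRep.{u, v, w'} N hN o) : Prop :=
  ∃ W : C.H ≃ₗᵢ[ℂ] C'.H,
    (∀ (x : N.fib o) (v : C.H), W (C.eta x v) = C'.eta x (W v)) ∧
    (∀ (p : SPath K o o) (v : C.H), W (C.V p v) = C'.V p (W v))

/-- A representation of a single C*-algebra on a Hilbert space. -/
structure AlgRep (A : Type v) [CStarAlgebra A] where
  H : Type w
  [nacg : NormedAddCommGroup H]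
  [ips : InnerProductSpace ℂ H]
  [cpl : CompleteSpace H]
  rho : A →⋆ₐ[ℂ] (H →L[ℂ] H)

attribute [instance] AlgRep.nacg AlgRep.ips AlgRep.cpl

/-- A Hilbert space representation (on a single Hilbert space) of the restriction of
a net of C*-algebras to a subset `P` of the poset. -/
structure SubNetHSRep (N : CStarNet.{u, v} K) (P : Set K) where
  H : Type w
  [nacg : NormedAddCommGroup H]
  [ips : InnerProductSpace ℂ H]
  [cpl : CompleteSpace H]
  rep : ∀ o ∈ P, N.fib o →⋆ₐ[ℂ] (H →L[ℂ] H)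
  compat : ∀ ⦃a o : K⦄ (ha : a ∈ P) (ho : o ∈ P) (h : a ≤ o) (x : N.fib a),
      rep o ho (N.incl h x) = rep a ha x

attribute [instance] SubNetHSRep.nacg SubNetHSRep.ips SubNetHSRep.cpl

/-! ### Amenability -/

/-- The space `ℓ∞(G)` of bounded real-valued functions on `G`. -/
def BddFuns (G : Type w) : Submodule ℝ (G → ℝ) where
  carrier := {f | ∃ C, ∀ g, |f g| ≤ C}
  add_mem' := by
    rintro f g ⟨C, hC⟩ ⟨D, hD⟩
    exact ⟨C + D, fun x => (abs_add_le _ _).trans (add_le_add (hC x) (hD x))⟩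
  zero_mem' := ⟨0, by simp⟩
  smul_mem' := by
    rintro c f ⟨C, hC⟩
    refine ⟨|c| * C, fun x => ?_⟩
    have : |c • f x| = |c| * |f x| := by simp [abs_mul]
    calc |(c • f) x| = |c| * |f x| := by simpa using this
      _ ≤ |c| * C := mul_le_mul_of_nonneg_left (hC x) (abs_nonneg c)

def BddFuns.const (G : Type w) (r : ℝ) : BddFuns G :=
  ⟨fun _ => r, ⟨|r|, fun _ => le_rfl⟩⟩

def BddFuns.rtrans {G : Type w} [Group G] (f : BddFuns G) (h : G) : BddFuns G :=
  ⟨fun g => (f : G → ℝ) (g * h), by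
    obtain ⟨C, hC⟩ := f.2
    exact ⟨C, fun g => hC (g * h)⟩⟩

/-- A right invariant mean on `ℓ∞(G)`. -/
structure RightInvariantMean (G : Type w) [Group G] where
  mean : BddFuns G →ₗ[ℝ] ℝ
  nonneg : ∀ f : BddFuns G, (∀ g, 0 ≤ (f : G → ℝ) g) → 0 ≤ mean f
  normalized : mean (BddFuns.const G 1) = 1
  rightInv : ∀ (f : BddFuns G) (h : G), mean (BddFuns.rtrans f h) = mean f

/-- Amenability of a (discrete) group. -/
def IsAmenable (G : Type w) [Group G] : Prop := Nonempty (RightInvariantMean G)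

/-! ### Covariant nets -/

/-- A `G`-covariant structure on a net of C*-algebras, where `G` acts on the poset `K`
by order preserving bijections. -/
structure CovariantNet {G : Type w} [Group G] [MulAction G K]
    (hord : ∀ (g : G) (a b : K), a ≤ b → g • a ≤ g • b) (N : CStarNet.{u, v} K) where
  act : ∀ (g : G) (o : K), N.fib o ≃⋆ₐ[ℂ] N.fib (g • o)
  act_mul : ∀ (g h : G) (o : K) (x : N.fib o),
      N.fibCast (mul_smul h g o) (act (h * g) o x) = act h (g • o) (act g o x)
  act_incl : ∀ (g : G) ⦃a o : K⦄ (hao : a ≤ o) (x : N.fib a),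
      act g o (N.incl hao x) = N.incl (hord g a o hao) (act g a x)

/-- A `G`-invariant state of a `G`-covariant net. -/
def NetState.Invariant {G : Type w} [Group G] [MulAction G K]
    {hord : ∀ (g : G) (a b : K), a ≤ b → g • a ≤ g • b} {N : CStarNet.{u, v} K}
    (α : CovariantNet hord N) (ω : NetState N) : Prop :=
  ∀ (g : G) (o : K) (x : N.fib o), (ω.st (g • o)).lin (α.act g o x) = (ω.st o).lin x

/-! ### The generalized Čech cocycle -/

/-- A 1-simplex of the simplicial set `Σ°_*(K)`: two vertices and a nonempty support
`F` lying below both of them. -/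
structure CechSimplex1 (K : Type u) [PartialOrder K] : Type u where
  F : Set K
  hne : F.Nonempty
  src : K
  tgt : K
  hsrc : ∀ a ∈ F, a ≤ src
  htgt : ∀ a ∈ F, a ≤ tgt

def CechSimplex1.swap (s : CechSimplex1 K) : CechSimplex1 K :=
  ⟨s.F, s.hne, s.tgt, s.src, s.htgt, s.hsrc⟩

/-- `A^F_o`: the C*-subalgebra of the fibre over `o` generated by the images of the
fibres over the elements of `F`. -/
def CStarNet.fibGen (N : CStarNet.{u, v} K) (F : Set K) (o : K) (hF : ∀ a ∈ F, a ≤ o) :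
    StarSubalgebra ℂ (N.fib o) :=
  (StarAlgebra.adjoin ℂ (⋃ a, ⋃ h : a ∈ F, Set.range (N.incl (hF a h)))).topologicalClosure

theorem CStarNet.mem_fibGen (N : CStarNet.{u, v} K) {F : Set K} {o : K}
    (hF : ∀ a ∈ F, a ≤ o) {a : K} (ha : a ∈ F) (x : N.fib a) :
    N.incl (hF a ha) x ∈ N.fibGen F o hF :=
  StarSubalgebra.le_topologicalClosure _
    (StarAlgebra.subset_adjoin ℂ _
      (Set.mem_iUnion.2 ⟨a, Set.mem_iUnion.2 ⟨ha, Set.mem_range_self x⟩⟩))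

/-- A generalized Čech cocycle of the net `N` defined over the collection `D` of
1-simplices of `Σ°_*(K)`. -/
structure CechCocycle (N : CStarNet.{u, v} K) (D : Set (CechSimplex1 K)) where
  zeta : ∀ s ∈ D, (N.fibGen s.F s.src s.hsrc ≃⋆ₐ[ℂ] N.fibGen s.F s.tgt s.htgt)
  compat : ∀ (s : CechSimplex1 K) (hs : s ∈ D) ⦃a : K⦄ (ha : a ∈ s.F) (x : N.fib a),
      (zeta s hs ⟨N.incl (s.hsrc a ha) x, N.mem_fibGen s.hsrc ha x⟩ : N.fib s.tgt)
        = N.incl (s.htgt a ha) x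

/-- The domain of the Čech cocycle of a net: the union of all the domains over which
a Čech cocycle of the net exists. -/
def CechDomain (N : CStarNet.{u, v} K) : Set (CechSimplex1 K) :=
  {s | ∃ D : Set (CechSimplex1 K), Nonempty (CechCocycle N D) ∧ s ∈ D}


/-- A representation of a C*-net bundle and a covariant representation of its holonomy
dynamical system correspond to each other. -/
def MatchesCov {N : CStarNet.{u, v} K} {hN : IsCStarNetBundle N} {o : K}
    (R : NetRep.{u, v, w} N) (C : CovRep.{u, v, w'} N hN o) : Prop :=
  ∃ W : R.H o ≃ₗᵢ[ℂ] C.H,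
    (∀ (x : N.fib o) (v : R.H o), W (R.rep o x v) = C.eta x (W v)) ∧
    (∀ (p : SPath K o o) (v : R.H o), W (R.Upath p v) = C.V p (W v))


/-! ### Auxiliary lemmas -/

namespace SPath

theorem cons_eq_comp_single {a b c : K} (p : SPath K a b) (s : Simplex1 K)
    (h1 : s.d1 = b) (h0 : s.d0 = c) : SPath.cons p s h1 h0 = p.comp (single s h1 h0) := rfl

theorem reverse_single {a b : K} (s : Simplex1 K) (h1 : s.d1 = a) (h0 : s.d0 = b) :
    (single s h1 h0).reverse = single s.op h0 h1 := rfl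

theorem reverse_comp {a b c : K} (p : SPath K a b) (q : SPath K b c) :
    (p.comp q).reverse = q.reverse.comp p.reverse := by
  induction q with
  | nil => show p.reverse = (SPath.nil b).comp p.reverse ; rw [nil_comp]
  | cons q s h1 h0 ih =>
      show (single s.op h0 h1).comp (p.comp q).reverse = _
      rw [ih]
      show _ = ((single s.op h0 h1).comp q.reverse).comp p.reverse
      rw [comp_assoc]

theorem reverse_reverse {a b : K} (p : SPath K a b) : p.reverse.reverse = p := by
  induction p with
  | nil => rfl
  | cons p s h1 h0 ih =>
      show ((single s.op h0 h1).comp p.reverse).reverse = _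
      rw [reverse_comp, ih]
      rfl

theorem htp_cancel {a b c d : K} (q : SPath K a b) (p : SPath K c b) (r : SPath K b d) :
    Homotopic ((q.comp p.reverse).comp (p.comp r)) (q.comp r) := by
  rw [comp_assoc, ← comp_assoc p.reverse]
  refine Homotopic.comp_congr (.refl q) ?_
  have h := Homotopic.comp_congr (reverse_comp_self p) (Homotopic.refl r)
  rwa [nil_comp] at h

theorem nerve_comp_htp {a b c : K} (h1 : a ≤ b) (h2 : b ≤ c) :
    Homotopic ((nervePath h1).comp (nervePath h2)) (nervePath (h1.trans h2)) :=
  Homotopic.triangle (K := K)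
    ⟨c, ⟨c, c, b, le_rfl, h2⟩, ⟨c, c, a, le_rfl, h1.trans h2⟩, ⟨b, b, a, le_rfl, h1⟩,
      le_rfl, le_rfl, h2, rfl, rfl, rfl⟩ rfl rfl

theorem nerve_single_htp (s : Simplex1 K) :
    Homotopic ((nervePath s.le1).comp ((nervePath s.le0).reverse)) (single s rfl rfl) :=
  Homotopic.triangle (K := K)
    ⟨s.supp, ⟨s.supp, s.d0, s.supp, s.le0, le_rfl⟩, s, ⟨s.supp, s.supp, s.d1, le_rfl, s.le1⟩,
      le_rfl, le_rfl, le_rfl, rfl, rfl, rfl⟩ rfl rfl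

end SPath

namespace CStarNet

variable (N : CStarNet.{u, v} K)

theorem incl_le_rfl {a : K} (x : N.fib a) : N.incl le_rfl x = x :=
  N.incl_injective (le_refl a) (N.incl_comp (le_refl a) (le_refl a) x)

theorem fibCast_rfl {a : K} (x : N.fib a) : N.fibCast rfl x = x := rfl

variable (hN : IsCStarNetBundle N)

theorem holEquiv_apply {a o : K} (h : a ≤ o) (x : N.fib a) :
    N.holEquiv hN h x = N.incl h x := rfl

theorem holEquiv_le_rfl_symm {a : K} (x : N.fib a) :
    (N.holEquiv hN (le_refl a)).symm x = x := by
  calc (N.holEquiv hN (le_refl a)).symm x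
      = (N.holEquiv hN (le_refl a)).symm (N.holEquiv hN (le_refl a) x) := by
        rw [holEquiv_apply, incl_le_rfl]
    _ = x := StarAlgEquiv.symm_apply_apply _ _

theorem holPath_comp {a b c : K} (p : SPath K a b) (q : SPath K b c) (x : N.fib a) :
    N.holPath hN (p.comp q) x = N.holPath hN q (N.holPath hN p x) := by
  induction q with
  | nil => rfl
  | cons q s h1 h0 ih =>
      show (N.fibCast h0) ((N.hol1 hN s) ((N.fibCast h1.symm) (N.holPath hN (p.comp q) x))) = _
      rw [ih]; rfl

theorem holPath_rev_cancel {a b : K} (p : SPath K a b) (x : N.fib a) :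
    N.holPath hN p.reverse (N.holPath hN p x) = x := by
  induction p with
  | nil => rfl
  | cons p s h1 h0 ih =>
      obtain ⟨supp, d0, d1, l0, l1⟩ := s
      subst h1 h0
      show N.holPath hN ((SPath.single (Simplex1.op ⟨supp, d0, d1, l0, l1⟩) rfl rfl).comp
        p.reverse) _ = x
      erw [holPath_comp]
      have h2 : N.holPath hN (SPath.single (Simplex1.op ⟨supp, d0, d1, l0, l1⟩) rfl rfl)
          (N.holPath hN (SPath.cons p ⟨supp, d0, d1, l0, l1⟩ rfl rfl) x)
          = N.holPath hN p x := by
        show N.fibCast rfl ((N.hol1 hN (Simplex1.op ⟨supp, d0, d1, l0, l1⟩))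
          (N.fibCast rfl (N.fibCast rfl ((N.hol1 hN ⟨supp, d0, d1, l0, l1⟩)
          (N.fibCast rfl (N.holPath hN p x)))))) = _
        rw [fibCast_rfl, fibCast_rfl, fibCast_rfl]
        show (N.holEquiv hN l1).symm ((N.holEquiv hN l0) ((N.holEquiv hN l0).symm
          ((N.holEquiv hN l1) (N.holPath hN p x)))) = _
        rw [StarAlgEquiv.apply_symm_apply, StarAlgEquiv.symm_apply_apply]
      rw [h2]; exact ih

theorem holPath_cancel_rev {a b : K} (p : SPath K a b) (x : N.fib b) :
    N.holPath hN p (N.holPath hN p.reverse x) = x :=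
  EquivLike.injective (N.holPath hN p.reverse)
    (N.holPath_rev_cancel hN p (N.holPath hN p.reverse x))

theorem holPath_symm_eq {a b : K} (p : SPath K a b) (x : N.fib b) :
    (N.holPath hN p).symm x = N.holPath hN p.reverse x :=
  EquivLike.injective (N.holPath hN p) (by
    rw [StarAlgEquiv.apply_symm_apply, holPath_cancel_rev])

theorem holPath_nerve {a b : K} (h : a ≤ b) (x : N.fib a) :
    N.holPath hN (SPath.nervePath h) x = N.incl h x := by
  show N.fibCast rfl ((N.hol1 hN ⟨b, b, a, le_rfl, h⟩) (N.fibCast rfl x)) = _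
  rw [fibCast_rfl, fibCast_rfl]
  show (N.holEquiv hN (le_refl b)).symm ((N.holEquiv hN h) x) = _
  rw [holEquiv_le_rfl_symm, holEquiv_apply]

end CStarNet

namespace NetRep

variable {N : CStarNet.{u, v} K} (R : NetRep.{u, v, w} N)

theorem hCast_rfl {a : K} (v : R.H a) : R.hCast rfl v = v := rfl

theorem U_le_rfl {a : K} (v : R.H a) : R.U (le_refl a) v = v :=
  (R.U (le_refl a)).injective (R.U_comp (le_refl a) (le_refl a) v)

theorem U_le_rfl_symm {a : K} (v : R.H a) : (R.U (le_refl a)).symm v = v := by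
  calc (R.U (le_refl a)).symm v = (R.U (le_refl a)).symm (R.U (le_refl a) v) := by
        rw [U_le_rfl]
    _ = v := (R.U (le_refl a)).symm_apply_apply v

theorem Upath_comp {a b c : K} (p : SPath K a b) (q : SPath K b c) (v : R.H a) :
    R.Upath (p.comp q) v = R.Upath q (R.Upath p v) := by
  induction q with
  | nil => rfl
  | cons q s h1 h0 ih =>
      show R.hCast h0 (R.U1 s (R.hCast h1.symm (R.Upath (p.comp q) v))) = _
      rw [ih]; rfl

theorem Upath_rev_cancel {a b : K} (p : SPath K a b) (v : R.H a) :
    R.Upath p.reverse (R.Upath p v) = v := by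
  induction p with
  | nil => rfl
  | cons p s h1 h0 ih =>
      obtain ⟨supp, d0, d1, l0, l1⟩ := s
      subst h1 h0
      show R.Upath ((SPath.single (Simplex1.op ⟨supp, d0, d1, l0, l1⟩) rfl rfl).comp
        p.reverse) _ = v
      erw [Upath_comp]
      have h2 : R.Upath (SPath.single (Simplex1.op ⟨supp, d0, d1, l0, l1⟩) rfl rfl)
          (R.Upath (SPath.cons p ⟨supp, d0, d1, l0, l1⟩ rfl rfl) v) = R.Upath p v := by
        show (R.U l1).symm ((R.U l0) ((R.U l0).symm ((R.U l1) (R.Upath p v)))) = _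
        rw [LinearIsometryEquiv.apply_symm_apply, LinearIsometryEquiv.symm_apply_apply]
      rw [h2]; exact ih

theorem Upath_cancel_rev {a b : K} (p : SPath K a b) (v : R.H b) :
    R.Upath p (R.Upath p.reverse v) = v :=
  (R.Upath p.reverse).injective (R.Upath_rev_cancel p (R.Upath p.reverse v))

theorem Upath_symm_eq {a b : K} (p : SPath K a b) (v : R.H b) :
    (R.Upath p).symm v = R.Upath p.reverse v :=
  (R.Upath p).injective (by
    rw [LinearIsometryEquiv.apply_symm_apply, Upath_cancel_rev])

theorem Upath_nerve {a b : K} (h : a ≤ b) (v : R.H a) :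
    R.Upath (SPath.nervePath h) v = R.U h v := by
  show (R.U (le_refl b)).symm (R.U h v) = _
  rw [U_le_rfl_symm]

theorem U_triangle {supp s0 s1 s2 x y z : K} (le0 : s0 ≤ supp) (le1 : s1 ≤ supp)
    (le2 : s2 ≤ supp) (q00 : x ≤ s0) (q01 : y ≤ s0) (q10 : x ≤ s1) (q11 : z ≤ s1)
    (q20 : y ≤ s2) (q21 : z ≤ s2) (v : R.H z) :
    (R.U q00).symm (R.U q01 ((R.U q20).symm (R.U q21 v))) = (R.U q10).symm (R.U q11 v) := by
  apply (R.U q00).injective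
  apply (R.U le0).injective
  calc R.U le0 (R.U q00 ((R.U q00).symm (R.U q01 ((R.U q20).symm (R.U q21 v)))))
      = R.U le0 (R.U q01 ((R.U q20).symm (R.U q21 v))) := by
        rw [LinearIsometryEquiv.apply_symm_apply]
    _ = R.U le2 (R.U q20 ((R.U q20).symm (R.U q21 v))) := by
        rw [R.U_comp q01 le0, R.U_comp q20 le2]
    _ = R.U le2 (R.U q21 v) := by rw [LinearIsometryEquiv.apply_symm_apply]
    _ = R.U le1 (R.U q11 v) := by rw [R.U_comp q21 le2, R.U_comp q11 le1]
    _ = R.U le1 (R.U q10 ((R.U q10).symm (R.U q11 v))) := by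
        rw [LinearIsometryEquiv.apply_symm_apply]
    _ = R.U le0 (R.U q00 ((R.U q10).symm (R.U q11 v))) := by
        rw [R.U_comp q10 le1, R.U_comp q00 le0]

theorem Upath_single_degen {a : K} (s : Simplex1 K) (h0 : s.d0 = a) (h1 : s.d1 = a)
    (hs : s.supp = a) (v : R.H a) : R.Upath (SPath.single s h1 h0) v = v := by
  obtain ⟨supp, d0, d1, l0, l1⟩ := s
  dsimp only at h0 h1 hs
  subst h0 h1 hs
  show (R.U l0).symm (R.U l1 v) = v
  rw [show l1 = l0 from rfl, LinearIsometryEquiv.symm_apply_apply]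

theorem Upath_triangle_helper (c : Simplex2 K) {a b : K} (h1 : c.d2.d1 = a) (h0 : c.d0.d0 = b)
    (v : R.H a) :
    R.Upath ((SPath.single c.d2 h1 rfl).comp (SPath.single c.d0 c.h10 h0)) v
      = R.Upath (SPath.single c.d1 (c.h11.trans h1) (c.h00.symm.trans h0)) v := by
  obtain ⟨supp, d0f, d1f, d2f, le0, le1, le2, h00, h11, h10⟩ := c
  obtain ⟨s0, v00, v01, q00, q01⟩ := d0f
  obtain ⟨s1, v10, v11, q10, q11⟩ := d1f
  obtain ⟨s2, v20, v21, q20, q21⟩ := d2f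
  dsimp only at h00 h11 h10 h1 h0
  subst h00 h11 h10 h1 h0
  rw [Upath_comp]
  exact R.U_triangle le0 le1 le2 q00 q01 q10 q11 q20 q21 v

theorem Upath_hom {a b : K} {p q : SPath K a b} (h : SPath.Homotopic p q) :
    ∀ v : R.H a, R.Upath p v = R.Upath q v := by
  induction h with
  | refl _ => intro v; rfl
  | symm _ ih => intro v; exact (ih v).symm
  | trans _ _ ih1 ih2 => intro v; exact (ih1 v).trans (ih2 v)
  | comp_congr _ _ ih1 ih2 => intro v; rw [Upath_comp, Upath_comp, ih1, ih2]
  | degen s h0 h1 hs =>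
      intro v
      exact (R.Upath_single_degen s h0 h1 hs v).symm
  | triangle c h1 h0 =>
      intro v
      exact R.Upath_triangle_helper c h1 h0 v

theorem U1_rep (hN : IsCStarNetBundle N) (s : Simplex1 K) (x : N.fib s.d1) (v : R.H s.d1) :
    R.U1 s (R.rep s.d1 x v) = R.rep s.d0 (N.hol1 hN s x) (R.U1 s v) := by
  show (R.U s.le0).symm (R.U s.le1 (R.rep s.d1 x v))
    = R.rep s.d0 (N.hol1 hN s x) ((R.U s.le0).symm (R.U s.le1 v))
  rw [R.intertwine s.le1 x v]
  apply (R.U s.le0).injective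
  rw [LinearIsometryEquiv.apply_symm_apply, R.intertwine s.le0,
    LinearIsometryEquiv.apply_symm_apply]
  have key : N.incl s.le0 (N.hol1 hN s x) = N.incl s.le1 x := by
    calc N.incl s.le0 (N.hol1 hN s x)
        = (N.holEquiv hN s.le0) ((N.holEquiv hN s.le0).symm ((N.holEquiv hN s.le1) x)) := rfl
      _ = (N.holEquiv hN s.le1) x := StarAlgEquiv.apply_symm_apply _ _
  rw [key]

theorem Upath_rep (hN : IsCStarNetBundle N) {a b : K} (p : SPath K a b) (x : N.fib a)
    (v : R.H a) :
    R.Upath p (R.rep a x v) = R.rep b (N.holPath hN p x) (R.Upath p v) := by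
  induction p with
  | nil => rfl
  | cons p s h1 h0 ih =>
      obtain ⟨supp, d0, d1, l0, l1⟩ := s
      subst h1 h0
      show R.U1 ⟨supp, d0, d1, l0, l1⟩ (R.Upath p (R.rep a x v)) = _
      rw [ih, R.U1_rep hN ⟨supp, d0, d1, l0, l1⟩]
      rfl

theorem map_Upath {R' : NetRep.{u, v, w'} N} (T : ∀ a, R.H a ≃ₗᵢ[ℂ] R'.H a)
    (hT : ∀ ⦃a b : K⦄ (h : a ≤ b) (v : R.H a), T b (R.U h v) = R'.U h (T a v))
    {a b : K} (p : SPath K a b) (v : R.H a) : T b (R.Upath p v) = R'.Upath p (T a v) := by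
  induction p with
  | nil => rfl
  | cons p s h1 h0 ih =>
      obtain ⟨supp, d0, d1, l0, l1⟩ := s
      dsimp only at h1 h0
      subst h1 h0
      show T d0 ((R.U l0).symm (R.U l1 (R.Upath p v)))
        = (R'.U l0).symm (R'.U l1 (R'.Upath p (T a v)))
      rw [← ih]
      have hsymm : ∀ w : R.H supp, T d0 ((R.U l0).symm w) = (R'.U l0).symm (T supp w) := by
        intro w
        apply (R'.U l0).injective
        rw [LinearIsometryEquiv.apply_symm_apply, ← hT l0,
          LinearIsometryEquiv.apply_symm_apply]
      rw [hsymm, hT l1]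

end NetRep

namespace CovRep

variable {N : CStarNet.{u, v} K} {hN : IsCStarNetBundle N} {o : K}
variable (C : CovRep.{u, v, w} N hN o)

theorem V_comp (p q : SPath K o o) (v : C.H) : C.V (p.comp q) v = C.V q (C.V p v) := by
  rw [C.V_mul]; rfl

theorem V_nil (v : C.H) : C.V (SPath.nil o) v = v := by
  have h := C.V_comp (SPath.nil o) (SPath.nil o) v
  exact ((C.V (SPath.nil o)).injective h).symm

theorem V_rev_cancel (p : SPath K o o) (v : C.H) : C.V p.reverse (C.V p v) = v := by
  rw [← C.V_comp, C.V_hom _ _ (SPath.comp_reverse_self p), C.V_nil]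

theorem V_cancel_rev (p : SPath K o o) (v : C.H) : C.V p (C.V p.reverse v) = v := by
  rw [← C.V_comp, C.V_hom _ _ (SPath.reverse_comp_self p), C.V_nil]

theorem V_symm_eq (p : SPath K o o) (v : C.H) : (C.V p).symm v = C.V p.reverse v :=
  (C.V p).injective (by rw [LinearIsometryEquiv.apply_symm_apply, V_cancel_rev])

end CovRep

/-! ### Homotopy bookkeeping lemmas -/

namespace SPath

theorem loop_comp_htp {o a b c : K} (pa : SPath K o a) (pb : SPath K o b) (pc : SPath K o c)
    (h1 : a ≤ b) (h2 : b ≤ c) :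
    Homotopic ((pa.comp ((nervePath h1).comp pb.reverse)).comp
        (pb.comp ((nervePath h2).comp pc.reverse)))
      (pa.comp ((nervePath (h1.trans h2)).comp pc.reverse)) := by
  rw [← comp_assoc pa (nervePath h1) pb.reverse]
  refine (htp_cancel (pa.comp (nervePath h1)) pb ((nervePath h2).comp pc.reverse)).trans ?_
  rw [comp_assoc pa (nervePath h1) ((nervePath h2).comp pc.reverse),
    ← comp_assoc (nervePath h1) (nervePath h2) pc.reverse]
  exact Homotopic.comp_congr (.refl pa)
    (Homotopic.comp_congr (nerve_comp_htp h1 h2) (.refl _))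

theorem rev_absorb {o a b : K} (pa : SPath K o a) (X : SPath K a b) :
    Homotopic (pa.reverse.comp (pa.comp X)) X := by
  rw [← comp_assoc pa.reverse pa X]
  have h := Homotopic.comp_congr (reverse_comp_self pa) (Homotopic.refl X)
  rwa [nil_comp] at h

theorem absorb_rev {o a b : K} (pa : SPath K o a) (q : SPath K a b) (pb : SPath K o b) :
    Homotopic ((pa.comp (q.comp pb.reverse)).comp pb) (pa.comp q) := by
  rw [comp_assoc pa (q.comp pb.reverse) pb, comp_assoc q pb.reverse pb]
  exact Homotopic.comp_congr (.refl pa)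
    (Homotopic.comp_congr (Homotopic.refl q) (reverse_comp_self pb))

theorem cons_loop_htp {o a : K} (pa : SPath K o a) (s : Simplex1 K) (pb : SPath K o s.d1)
    (pc : SPath K o s.d0) (psup : SPath K o s.supp) (p : SPath K a s.d1) :
    Homotopic
      (((pa.comp (p.comp pb.reverse)).comp
          (pb.comp ((nervePath s.le1).comp psup.reverse))).comp
        ((pc.comp ((nervePath s.le0).comp psup.reverse)).reverse))
      (pa.comp ((SPath.cons p s rfl rfl).comp pc.reverse)) := by
  rw [reverse_comp pc ((nervePath s.le0).comp psup.reverse),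
    reverse_comp (nervePath s.le0) psup.reverse, reverse_reverse psup]
  rw [← comp_assoc pa p pb.reverse]
  refine (Homotopic.comp_congr
    (htp_cancel (pa.comp p) pb ((nervePath s.le1).comp psup.reverse))
    (Homotopic.refl _)).trans ?_
  rw [← comp_assoc (pa.comp p) (nervePath s.le1) psup.reverse,
    comp_assoc psup (nervePath s.le0).reverse pc.reverse]
  refine (htp_cancel ((pa.comp p).comp (nervePath s.le1)) psup
    ((nervePath s.le0).reverse.comp pc.reverse)).trans ?_
  rw [comp_assoc (pa.comp p) (nervePath s.le1) ((nervePath s.le0).reverse.comp pc.reverse),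
    ← comp_assoc (nervePath s.le1) (nervePath s.le0).reverse pc.reverse]
  refine (Homotopic.comp_congr (.refl _)
    (Homotopic.comp_congr (nerve_single_htp s) (.refl _))).trans ?_
  rw [← comp_assoc (pa.comp p) (single s rfl rfl) pc.reverse,
    comp_assoc pa p (single s rfl rfl), comp_assoc pa (p.comp (single s rfl rfl)) pc.reverse]
  exact Homotopic.refl _

end SPath

/-! ### The two constructions -/

def repToCov {N : CStarNet.{u, v} K} (hN : IsCStarNetBundle N) (o : K)
    (R : NetRep.{u, v, w} N) : CovRep.{u, v, w} N hN o where
  H := R.H o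
  eta := R.rep o
  V := fun p => R.Upath p
  V_hom := fun _ _ h => LinearIsometryEquiv.ext (R.Upath_hom h)
  V_mul := fun p q => LinearIsometryEquiv.ext fun v => R.Upath_comp p q v
  cov := fun p x v => (R.Upath_rep hN p x v).symm

def covToRep {N : CStarNet.{u, v} K} {hN : IsCStarNetBundle N} {o : K}
    (hconn : ∀ a b : K, Nonempty (SPath K a b)) (C : CovRep.{u, v, w} N hN o) :
    NetRep.{u, v, w} N where
  H := fun _ => C.H
  rep := fun a => C.eta.comp
    ((N.holPath hN ((hconn o a).some).reverse : N.fib a →⋆ₐ[ℂ] N.fib o))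
  U := fun {a b} h => C.V (((hconn o a).some).comp ((SPath.nervePath h).comp
    ((hconn o b).some).reverse))
  intertwine := by
    intro a b h x v
    show C.V (((hconn o a).some).comp ((SPath.nervePath h).comp ((hconn o b).some).reverse))
        (C.eta (N.holPath hN ((hconn o a).some).reverse x) v)
      = C.eta (N.holPath hN ((hconn o b).some).reverse (N.incl h x))
        (C.V (((hconn o a).some).comp ((SPath.nervePath h).comp
          ((hconn o b).some).reverse)) v)
    rw [← C.cov]
    have hx : N.holPath hN (((hconn o a).some).comp ((SPath.nervePath h).comp
          ((hconn o b).some).reverse)) (N.holPath hN ((hconn o a).some).reverse x)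
        = N.holPath hN ((hconn o b).some).reverse (N.incl h x) := by
      rw [N.holPath_comp hN, N.holPath_cancel_rev hN, N.holPath_comp hN, N.holPath_nerve hN]
    rw [hx]
  U_comp := by
    intro a b c h1 h2 v
    show C.V (((hconn o b).some).comp ((SPath.nervePath h2).comp ((hconn o c).some).reverse))
        (C.V (((hconn o a).some).comp ((SPath.nervePath h1).comp
          ((hconn o b).some).reverse)) v)
      = C.V (((hconn o a).some).comp ((SPath.nervePath (h1.trans h2)).comp
          ((hconn o c).some).reverse)) v
    rw [← C.V_comp, C.V_hom _ _ (SPath.loop_comp_htp ((hconn o a).some) ((hconn o b).some)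
      ((hconn o c).some) h1 h2)]

theorem covToRep_Upath {N : CStarNet.{u, v} K} {hN : IsCStarNetBundle N} {o : K}
    (hconn : ∀ a b : K, Nonempty (SPath K a b)) (C : CovRep.{u, v, w} N hN o)
    {a b : K} (p : SPath K a b) (v : C.H) :
    (covToRep hconn C).Upath p v
      = C.V (((hconn o a).some).comp (p.comp ((hconn o b).some).reverse)) v := by
  induction p with
  | nil =>
      show v = _
      rw [SPath.nil_comp, C.V_hom _ _ (SPath.comp_reverse_self ((hconn o a).some)), C.V_nil]
  | cons p s h1 h0 ih =>
      obtain ⟨supp, d0, d1, l0, l1⟩ := s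
      dsimp only at h1 h0
      subst h1 h0
      show (C.V (((hconn o d0).some).comp ((SPath.nervePath l0).comp
          ((hconn o supp).some).reverse))).symm
        ((C.V (((hconn o d1).some).comp ((SPath.nervePath l1).comp
          ((hconn o supp).some).reverse)))
          ((covToRep hconn C).Upath p v)) = _
      rw [ih, C.V_symm_eq, ← C.V_comp, ← C.V_comp,
        ← SPath.comp_assoc (((hconn o a).some).comp (p.comp ((hconn o d1).some).reverse)),
        C.V_hom _ _ (SPath.cons_loop_htp ((hconn o a).some) ⟨supp, d0, d1, l0, l1⟩
          ((hconn o d1).some) ((hconn o d0).some) ((hconn o supp).some) p)]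
/-- representations of a C*-net bundle correspond, up to unitary
equivalence, to covariant representations of its holonomy dynamical system. -/
theorem statement_11 {K : Type u} [PartialOrder K]
    (hconn : ∀ a b : K, Nonempty (SPath K a b)) (o : K)
    (N : CStarNet.{u, v} K) (hN : IsCStarNetBundle N) :
    (∀ R : NetRep.{u, v, w} N, ∃ C : CovRep.{u, v, w} N hN o, MatchesCov R C) ∧
    (∀ C : CovRep.{u, v, w} N hN o, ∃ R : NetRep.{u, v, w} N, MatchesCov R C) ∧
    (∀ (R R' : NetRep.{u, v, w} N) (C C' : CovRep.{u, v, w} N hN o),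
        MatchesCov R C → MatchesCov R' C' →
        (NetRep.Equiv R R' ↔ CovRep.Equiv C C')) := by
  refine ⟨fun R => ⟨repToCov hN o R, LinearIsometryEquiv.refl ℂ (R.H o),
      fun x v => rfl, fun p v => rfl⟩, fun C => ?_, fun R R' C C' hRC hR'C' => ?_⟩
  · -- Part 2: from covariant representations to net representations
    refine ⟨covToRep hconn C, C.V ((hconn o o).some), fun x v => ?_, fun p v => ?_⟩
    · change C.H at v
      show C.V ((hconn o o).some)
          (C.eta (N.holPath hN ((hconn o o).some).reverse x) v) = _
      rw [← C.cov, N.holPath_cancel_rev hN]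
      rfl
    · change C.H at v
      show C.V ((hconn o o).some) ((covToRep hconn C).Upath p v) = _
      rw [covToRep_Upath hconn C p v, ← C.V_comp,
        C.V_hom _ _ (SPath.absorb_rev ((hconn o o).some) p ((hconn o o).some)),
        C.V_comp]
      rfl
  · -- Part 3: equivalences correspond
    obtain ⟨W, hW1, hW2⟩ := hRC
    obtain ⟨W', hW1', hW2'⟩ := hR'C'
    have hWinv1 : ∀ (x : N.fib o) (z : C.H), W.symm (C.eta x z) = R.rep o x (W.symm z) := by
      intro x z
      apply W.injective
      rw [hW1, W.apply_symm_apply, W.apply_symm_apply]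
    have hWinv2 : ∀ (p : SPath K o o) (z : C.H), W.symm (C.V p z) = R.Upath p (W.symm z) := by
      intro p z
      apply W.injective
      rw [hW2, W.apply_symm_apply, W.apply_symm_apply]
    have hW'inv1 : ∀ (x : N.fib o) (z : C'.H), W'.symm (C'.eta x z) = R'.rep o x (W'.symm z) := by
      intro x z
      apply W'.injective
      rw [hW1', W'.apply_symm_apply, W'.apply_symm_apply]
    have hW'inv2 : ∀ (p : SPath K o o) (z : C'.H),
        W'.symm (C'.V p z) = R'.Upath p (W'.symm z) := by
      intro p z
      apply W'.injective
      rw [hW2', W'.apply_symm_apply, W'.apply_symm_apply]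
    constructor
    · rintro ⟨T, hT1, hT2⟩
      refine ⟨W.symm.trans ((T o).trans W'), fun x v => ?_, fun p v => ?_⟩
      · show W' (T o (W.symm (C.eta x v))) = C'.eta x (W' (T o (W.symm v)))
        rw [hWinv1, hT1, hW1']
      · show W' (T o (W.symm (C.V p v))) = C'.V p (W' (T o (W.symm v)))
        rw [hWinv2, R.map_Upath T hT2 p, hW2']
    · rintro ⟨Wh, hWh1, hWh2⟩
      refine ⟨fun a => (R.Upath ((hconn o a).some)).symm.trans
        (W.trans (Wh.trans (W'.symm.trans (R'.Upath ((hconn o a).some))))), fun a x v => ?_, ?_⟩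
      · show R'.Upath ((hconn o a).some)
            (W'.symm (Wh (W ((R.Upath ((hconn o a).some)).symm (R.rep a x v)))))
          = R'.rep a x (R'.Upath ((hconn o a).some)
            (W'.symm (Wh (W ((R.Upath ((hconn o a).some)).symm v)))))
        simp only [R.Upath_symm_eq]
        rw [R.Upath_rep hN, hW1, hWh1, hW'inv1, R'.Upath_rep hN, N.holPath_cancel_rev hN]
      · intro a b h v
        show R'.Upath ((hconn o b).some)
            (W'.symm (Wh (W ((R.Upath ((hconn o b).some)).symm (R.U h v)))))
          = R'.U h (R'.Upath ((hconn o a).some)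
            (W'.symm (Wh (W ((R.Upath ((hconn o a).some)).symm v)))))
        simp only [R.Upath_symm_eq]
        rw [← R.Upath_nerve h v, ← R.Upath_comp,
          R.Upath_hom (SPath.Homotopic.symm
            (SPath.rev_absorb ((hconn o a).some)
              ((SPath.nervePath h).comp ((hconn o b).some).reverse))) v,
          R.Upath_comp, hW2, hWh2, hW'inv2, ← R'.Upath_comp,
          R'.Upath_hom (SPath.absorb_rev ((hconn o a).some) (SPath.nervePath h)
            ((hconn o b).some)) _,
          R'.Upath_comp, R'.Upath_nerve]

end AQFT
end
end

section
/- Let (A,j)_K be a net of C*-algebras over a poset K and let P ⊆ K be pathwise connected and such that the restricted net (A,j)_P admits a faithful Hilbert space representation. Then Σ°_*(P) is contained in the domain of the Čech cocycle of (A,j)_K. -/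
noncomputable section

universe u v w u' v' w' u'' v'' w''

namespace AQFT

/-! ### Nets of C*-algebras over a poset -/

open scoped ComplexOrder

variable {K : Type u} [PartialOrder K]

/-! ### Auxiliary material for Statement 18 -/

section Stmt18Aux

/-- Cast between equal star subalgebras. -/
def subalgCast {A : Type v} [Semiring A] [Algebra ℂ A] [StarRing A] [StarModule ℂ A]
    {S T : StarSubalgebra ℂ A} (h : S = T) : S ≃⋆ₐ[ℂ] T := by
  subst h; exact StarAlgEquiv.refl ℂ _

@[simp] theorem subalgCast_coe {A : Type v} [Semiring A] [Algebra ℂ A] [StarRing A]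
    [StarModule ℂ A] {S T : StarSubalgebra ℂ A} (h : S = T) (x : S) :
    (subalgCast h x : A) = x := by
  subst h; rfl

/-- The isomorphism of a star subalgebra with its image under an injective star algebra
homomorphism. -/
noncomputable def equivMapOfInjective {A : Type v} {B : Type w}
    [Semiring A] [Algebra ℂ A] [StarRing A] [StarModule ℂ A]
    [Semiring B] [Algebra ℂ B] [StarRing B] [StarModule ℂ B]
    (φ : A →⋆ₐ[ℂ] B) (hφ : Function.Injective φ) (S : StarSubalgebra ℂ A) :
    S ≃⋆ₐ[ℂ] (S.map φ) :=
  StarAlgEquiv.ofBijective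
    ((φ.comp S.subtype).codRestrict (S.map φ) fun x => ⟨x.1, x.2, rfl⟩)
    ⟨(StarAlgHom.injective_codRestrict _ _ _).2
        (hφ.comp Subtype.coe_injective),
      by rintro ⟨y, x, hx, rfl⟩; exact ⟨⟨x, hx⟩, rfl⟩⟩

@[simp] theorem equivMapOfInjective_coe {A : Type v} {B : Type w}
    [Semiring A] [Algebra ℂ A] [StarRing A] [StarModule ℂ A]
    [Semiring B] [Algebra ℂ B] [StarRing B] [StarModule ℂ B]
    (φ : A →⋆ₐ[ℂ] B) (hφ : Function.Injective φ) (S : StarSubalgebra ℂ A) (x : S) :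
    (equivMapOfInjective φ hφ S x : B) = φ x := rfl

variable {K : Type u} [PartialOrder K]

/-- The image of `A^F_o` under a faithful Hilbert space representation of the restricted
net only depends on `F`, not on `o`. -/
theorem map_fibGen_eq (N : CStarNet.{u, v} K) (P : Set K) (R : SubNetHSRep.{u, v, w} N P)
    (hfaith : ∀ (o : K) (ho : o ∈ P), Function.Injective (R.rep o ho))
    {F : Set K} (hFP : F ⊆ P) {o : K} (ho : o ∈ P) (hF : ∀ a ∈ F, a ≤ o) :
    (N.fibGen F o hF).map (R.rep o ho) =
      (StarAlgebra.adjoin ℂ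
        (⋃ a, ⋃ h : a ∈ F, Set.range (R.rep a (hFP h)))).topologicalClosure := by
  have hiso : Isometry (R.rep o ho) :=
    NonUnitalStarAlgHom.isometry (R.rep o ho) (hfaith o ho)
  have hce := hiso.isClosedEmbedding
  have himg : (R.rep o ho) '' (⋃ a, ⋃ h : a ∈ F, Set.range (N.incl (hF a h)))
      = ⋃ a, ⋃ h : a ∈ F, Set.range (R.rep a (hFP h)) := by
    rw [Set.image_iUnion]
    refine Set.iUnion_congr fun a => ?_
    rw [Set.image_iUnion]
    refine Set.iUnion_congr fun h => ?_
    rw [← Set.range_comp]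
    have hc : (⇑(R.rep o ho) ∘ ⇑(N.incl (hF a h))) = ⇑(R.rep a (hFP h)) :=
      funext fun x => R.compat (hFP h) ho (hF a h) x
    rw [hc]
  apply SetLike.ext'
  rw [StarSubalgebra.coe_map]
  unfold CStarNet.fibGen
  rw [StarSubalgebra.topologicalClosure_coe, StarSubalgebra.topologicalClosure_coe,
    ← hce.closure_image_eq]
  rw [← StarSubalgebra.coe_map, StarAlgHom.map_adjoin, himg]

end Stmt18Aux

/-- if `P ⊆ K` is pathwise connected and the restriction of the net to
`P` admits a faithful Hilbert space representation, then `Σ°_*(P)` is contained in the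
domain of the Čech cocycle of the net. -/
theorem statement_18 {K : Type u} [PartialOrder K] (N : CStarNet.{u, v} K) (P : Set K)
    (hP : ∀ a ∈ P, ∀ b ∈ P, ∃ p : SPath K a b, SPath.MemAll P p)
    (R : SubNetHSRep.{u, v, w} N P)
    (hfaith : ∀ (o : K) (ho : o ∈ P), Function.Injective (R.rep o ho)) :
    {s : CechSimplex1 K | s.F ⊆ P ∧ s.src ∈ P ∧ s.tgt ∈ P} ⊆ CechDomain N := by
  classical
  intro s hsmem
  refine ⟨{t : CechSimplex1 K | t.F ⊆ P ∧ t.src ∈ P ∧ t.tgt ∈ P}, ?_, hsmem⟩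
  set D : Set (CechSimplex1 K) := {t : CechSimplex1 K | t.F ⊆ P ∧ t.src ∈ P ∧ t.tgt ∈ P}
    with hD
  let Z : ∀ t ∈ D, (N.fibGen t.F t.src t.hsrc ≃⋆ₐ[ℂ] N.fibGen t.F t.tgt t.htgt) :=
    fun t ht =>
      (equivMapOfInjective (R.rep t.src ht.2.1) (hfaith _ _) _).trans
        ((subalgCast ((map_fibGen_eq N P R hfaith ht.1 ht.2.1 t.hsrc).trans
            (map_fibGen_eq N P R hfaith ht.1 ht.2.2 t.htgt).symm)).trans
          (equivMapOfInjective (R.rep t.tgt ht.2.2) (hfaith _ _) _).symm)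
  have hZ : ∀ (t : CechSimplex1 K) (ht : t ∈ D) (v : N.fibGen t.F t.src t.hsrc),
      R.rep t.tgt ht.2.2 (Z t ht v : N.fib t.tgt) = R.rep t.src ht.2.1 (v : N.fib t.src) := by
    intro t ht v
    set e1 := equivMapOfInjective (R.rep t.src ht.2.1) (hfaith _ _)
      (N.fibGen t.F t.src t.hsrc)
    set e2 := equivMapOfInjective (R.rep t.tgt ht.2.2) (hfaith _ _)
      (N.fibGen t.F t.tgt t.htgt)
    set c := subalgCast ((map_fibGen_eq N P R hfaith ht.1 ht.2.1 t.hsrc).trans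
      (map_fibGen_eq N P R hfaith ht.1 ht.2.2 t.htgt).symm)
    calc R.rep t.tgt ht.2.2 (Z t ht v : N.fib t.tgt)
        = (e2 (Z t ht v) : (R.H →L[ℂ] R.H)) :=
          (equivMapOfInjective_coe _ _ _ _).symm
      _ = (c (e1 v) : (R.H →L[ℂ] R.H)) := by
          rw [show Z t ht v = e2.symm (c (e1 v)) from rfl, e2.apply_symm_apply]
      _ = ((e1 v : N.fibGen t.F t.src t.hsrc |>.map (R.rep t.src ht.2.1))
            : (R.H →L[ℂ] R.H)) := subalgCast_coe _ _
      _ = R.rep t.src ht.2.1 (v : N.fib t.src) := equivMapOfInjective_coe _ _ _ _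
  refine ⟨⟨Z, ?_⟩⟩
  intro t ht a ha x
  have hgoal := hZ t ht ⟨N.incl (t.hsrc a ha) x, N.mem_fibGen t.hsrc ha x⟩
  apply hfaith t.tgt ht.2.2
  rw [hgoal]
  show R.rep t.src ht.2.1 (N.incl (t.hsrc a ha) x) = R.rep t.tgt ht.2.2 (N.incl (t.htgt a ha) x)
  rw [R.compat (ht.1 ha) ht.2.1 (t.hsrc a ha) x, R.compat (ht.1 ha) ht.2.2 (t.htgt a ha) x]

end AQFT
end
end

section
/- Let I(S¹) be the poset of nonempty open connected intervals of the unit circle S¹ whose closure is not all of S¹, ordered by inclusion. Then every C*-net bundle over I(S¹) whose Čech cocycle is globally defined is trivial, i.e. isomorphic to a constant net bundle. -/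
noncomputable section

universe u v w u' v' w' u'' v'' w''

namespace AQFT

/-! ### Nets of C*-algebras over a poset -/

open scoped ComplexOrder

variable {K : Type u} [PartialOrder K]

/-- The poset of nonempty open connected intervals of the circle `S¹ = ℝ/ℤ` whose
closure is not all of the circle, ordered by inclusion. -/
abbrev CircleIntervals : Type :=
  {I : Set (AddCircle (1 : ℝ)) // IsOpen I ∧ IsConnected I ∧ closure I ≠ Set.univ}

/-! ### Auxiliary material for Statement 19 -/

private theorem cech_transfer (N : CStarNet.{u, v} K) (hglob : CechDomain N = Set.univ)
    {a b o o2 : K} (hao : a ≤ o) (hbo : b ≤ o) (hao' : a ≤ o2) (hbo' : b ≤ o2)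
    {x : N.fib a} {y : N.fib b} (hxy : N.incl hao x = N.incl hbo y) :
    N.incl hao' x = N.incl hbo' y := by
  classical
  set s : CechSimplex1 K := ⟨{a, b}, ⟨a, Set.mem_insert _ _⟩, o, o2,
    fun c hc => by
      rcases hc with rfl | hc
      · exact hao
      · rw [Set.mem_singleton_iff] at hc; subst hc; exact hbo,
    fun c hc => by
      rcases hc with rfl | hc
      · exact hao'
      · rw [Set.mem_singleton_iff] at hc; subst hc; exact hbo'⟩ with hsdef
  have hmem : s ∈ CechDomain N := hglob ▸ Set.mem_univ s
  obtain ⟨D, ⟨ζ⟩, hsD⟩ := hmem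
  have ha : a ∈ s.F := Set.mem_insert _ _
  have hb : b ∈ s.F := Set.mem_insert_of_mem _ rfl
  have h1 := ζ.compat s hsD ha x
  have h2 := ζ.compat s hsD hb y
  have hsub : (⟨N.incl (s.hsrc a ha) x, N.mem_fibGen s.hsrc ha x⟩ :
      N.fibGen s.F s.src s.hsrc) = ⟨N.incl (s.hsrc b hb) y, N.mem_fibGen s.hsrc hb y⟩ :=
    Subtype.ext hxy
  rw [hsub] at h1
  exact h1.symm.trans h2


private def arcSet (x L : ℝ) : Set (AddCircle (1:ℝ)) :=
  ((↑) : ℝ → AddCircle (1:ℝ)) '' Set.Ioo x (x + L)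

private lemma coe_add_int (z : ℝ) (k : ℤ) : ((z + (k:ℝ) : ℝ) : AddCircle (1:ℝ)) = (z : ℝ) := by
  rw [QuotientAddGroup.eq_iff_sub_mem]
  exact AddSubgroup.mem_zmultiples_iff.mpr ⟨k, by simp [zsmul_eq_mul]⟩

private lemma coe_eq_int {x y : ℝ} (h : (x : AddCircle (1:ℝ)) = y) : ∃ k : ℤ, x - y = k := by
  rw [QuotientAddGroup.eq_iff_sub_mem] at h
  obtain ⟨k, hk⟩ := AddSubgroup.mem_zmultiples_iff.mp h
  exact ⟨k, by simpa [zsmul_eq_mul] using hk.symm⟩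

private lemma arcSet_subset {x L y M : ℝ} (k : ℤ) (h1 : y ≤ x + k) (h2 : x + (k:ℝ) + L ≤ y + M) :
    arcSet x L ⊆ arcSet y M := by
  rintro _ ⟨z, hz, rfl⟩
  exact ⟨z + k, ⟨by linarith [hz.1], by linarith [hz.2]⟩, coe_add_int z k⟩

private lemma arcK_prop (x L : ℝ) (h0 : 0 < L) (h1 : L < 1) :
    IsOpen (arcSet x L) ∧ IsConnected (arcSet x L) ∧ closure (arcSet x L) ≠ Set.univ := by
  refine ⟨QuotientAddGroup.isOpenMap_coe _ isOpen_Ioo,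
    (isConnected_Ioo (by linarith)).image _ continuous_quotient_mk'.continuousOn, ?_⟩
  intro hcl
  have hcpt : IsCompact (((↑) : ℝ → AddCircle (1:ℝ)) '' Set.Icc x (x+L)) :=
    isCompact_Icc.image continuous_quotient_mk'
  have hsub : closure (arcSet x L) ⊆ ((↑) : ℝ → AddCircle (1:ℝ)) '' Set.Icc x (x+L) :=
    closure_minimal (Set.image_mono Set.Ioo_subset_Icc_self) hcpt.isClosed
  have hmem : ((x + (1+L)/2 : ℝ) : AddCircle (1:ℝ)) ∈
      ((↑) : ℝ → AddCircle (1:ℝ)) '' Set.Icc x (x+L) := hsub (hcl ▸ Set.mem_univ _)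
  obtain ⟨z, hz, hze⟩ := hmem
  obtain ⟨k, hk⟩ := coe_eq_int hze
  have hk0 : (k:ℝ) < 0 := by rw [← hk]; linarith [hz.2]
  have hkm : (-1:ℝ) < (k:ℝ) := by rw [← hk]; linarith [hz.1]
  have h5 : k < 0 := by exact_mod_cast hk0
  have h6 : (-1:ℤ) < k := by exact_mod_cast hkm
  omega

private def arcK (x L : ℝ) (h0 : 0 < L) (h1 : L < 1) : CircleIntervals :=
  ⟨arcSet x L, arcK_prop x L h0 h1⟩

private def IsShortArc (s : CircleIntervals) : Prop := ∃ x : ℝ, s.val ⊆ arcSet x (1/8)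

private lemma exists_short_le (a : CircleIntervals) :
    ∃ s : CircleIntervals, s ≤ a ∧ IsShortArc s := by
  obtain ⟨p, hp⟩ := a.2.2.1.nonempty
  obtain ⟨x, rfl⟩ := Quotient.exists_rep p
  have hopen : IsOpen (((↑) : ℝ → AddCircle (1:ℝ)) ⁻¹' a.val) :=
    a.2.1.preimage continuous_quotient_mk'
  have hx : x ∈ (((↑) : ℝ → AddCircle (1:ℝ)) ⁻¹' a.val) := hp
  obtain ⟨ε, hε, hball⟩ := Metric.isOpen_iff.mp hopen x hx
  set r := min (ε/2) (1/16) with hr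
  have hr0 : 0 < r := lt_min (by linarith) (by norm_num)
  have hr16 : r ≤ 1/16 := min_le_right _ _
  have hrε : r ≤ ε/2 := min_le_left _ _
  refine ⟨arcK (x - r) (2*r) (by linarith) (by linarith), ?_, ?_⟩
  · show arcSet (x - r) (2*r) ⊆ a.val
    rintro _ ⟨z, hz, rfl⟩
    apply hball
    rw [Metric.mem_ball, Real.dist_eq, abs_lt]
    constructor <;> [skip; skip] <;> · simp only [Set.mem_Ioo] at hz; linarith [hz.1, hz.2]
  · exact ⟨x - r, arcSet_subset 0 (by push_cast; linarith) (by push_cast; linarith)⟩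

private lemma sorted3 (u b c : ℝ) (hb : 0 ≤ b) (hbc : b ≤ c) (hc : c < 1) :
    ∃ y : ℝ, (∃ k : ℤ, u + k ∈ Set.Icc y (y + 2/3)) ∧
      (∃ k : ℤ, (u + b) + k ∈ Set.Icc y (y + 2/3)) ∧
      (∃ k : ℤ, (u + c) + k ∈ Set.Icc y (y + 2/3)) := by
  rcases le_or_gt c (2/3) with h | h
  · refine ⟨u, ⟨0, ?_⟩, ⟨0, ?_⟩, ⟨0, ?_⟩⟩ <;>
      · rw [Set.mem_Icc]; push_cast; constructor <;> linarith
  · rcases le_or_gt b (c - 1/3) with h2 | h2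
    · refine ⟨u + c - 1, ⟨0, ?_⟩, ⟨0, ?_⟩, ⟨-1, ?_⟩⟩ <;>
        · rw [Set.mem_Icc]; push_cast; constructor <;> linarith
    · refine ⟨u + b, ⟨1, ?_⟩, ⟨0, ?_⟩, ⟨0, ?_⟩⟩ <;>
        · rw [Set.mem_Icc]; push_cast; constructor <;> linarith

private lemma threePoints (u v w : ℝ) :
    ∃ y : ℝ, (∃ k : ℤ, u + k ∈ Set.Icc y (y + 2/3)) ∧
      (∃ k : ℤ, v + k ∈ Set.Icc y (y + 2/3)) ∧
      (∃ k : ℤ, w + k ∈ Set.Icc y (y + 2/3)) := by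
  have key : ∀ v w : ℝ, Int.fract (v - u) ≤ Int.fract (w - u) →
      ∃ y : ℝ, (∃ k : ℤ, u + k ∈ Set.Icc y (y + 2/3)) ∧
        (∃ k : ℤ, v + k ∈ Set.Icc y (y + 2/3)) ∧
        (∃ k : ℤ, w + k ∈ Set.Icc y (y + 2/3)) := by
    intro v w hvw
    obtain ⟨y, ⟨k1, h1⟩, ⟨k2, h2⟩, ⟨k3, h3⟩⟩ :=
      sorted3 u (Int.fract (v - u)) (Int.fract (w - u)) (Int.fract_nonneg _) hvw
        (Int.fract_lt_one _)
    refine ⟨y, ⟨k1, h1⟩, ⟨k2 - ⌊v - u⌋, ?_⟩, ⟨k3 - ⌊w - u⌋, ?_⟩⟩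
    · have e : v + ((k2 - ⌊v - u⌋ : ℤ) : ℝ) = (u + Int.fract (v - u)) + k2 := by
        rw [Int.fract]; push_cast; ring
      rw [e]; exact h2
    · have e : w + ((k3 - ⌊w - u⌋ : ℤ) : ℝ) = (u + Int.fract (w - u)) + k3 := by
        rw [Int.fract]; push_cast; ring
      rw [e]; exact h3
  rcases le_total (Int.fract (v - u)) (Int.fract (w - u)) with h | h
  · exact key v w h
  · obtain ⟨y, hy1, hy2, hy3⟩ := key w v h
    exact ⟨y, hy1, hy3, hy2⟩

private lemma exists_upper3 (s t r : CircleIntervals) (hs : IsShortArc s) (ht : IsShortArc t)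
    (hr : IsShortArc r) : ∃ W : CircleIntervals, s ≤ W ∧ t ≤ W ∧ r ≤ W := by
  obtain ⟨xs, hxs⟩ := hs
  obtain ⟨xt, hxt⟩ := ht
  obtain ⟨xr, hxr⟩ := hr
  obtain ⟨y, ⟨k1, hk1⟩, ⟨k2, hk2⟩, ⟨k3, hk3⟩⟩ := threePoints xs xt xr
  rw [Set.mem_Icc] at hk1 hk2 hk3
  refine ⟨arcK y (19/24) (by norm_num) (by norm_num), ?_, ?_, ?_⟩
  · exact Set.Subset.trans hxs (arcSet_subset k1 hk1.1 (by linarith [hk1.2]))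
  · exact Set.Subset.trans hxt (arcSet_subset k2 hk2.1 (by linarith [hk2.2]))
  · exact Set.Subset.trans hxr (arcSet_subset k3 hk3.1 (by linarith [hk3.2]))



/-- every C*-net bundle over the poset of intervals of `S¹` whose Čech
cocycle is globally defined is trivial. -/
theorem statement_19 (N : CStarNet.{0, v} CircleIntervals)
    (hN : IsCStarNetBundle N) (hglob : CechDomain N = Set.univ) :
    IsTrivialNet N := by
  intro o₀
  choose s hs hS using exists_short_le
  have hpair : ∀ a : CircleIntervals, ∃ w, s a ≤ w ∧ s o₀ ≤ w := fun a => by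
    obtain ⟨W, h1, h2, _⟩ := exists_upper3 (s a) (s o₀) (s o₀) (hS a) (hS o₀) (hS o₀)
    exact ⟨W, h1, h2⟩
  choose w hw1 hw2 using hpair
  have key : ∀ ⦃p q : CircleIntervals⦄ (hpq : p ≤ q) (z : N.fib q),
      N.incl hpq ((N.holEquiv hN hpq).symm z) = z := fun p q hpq z =>
    (N.holEquiv hN hpq).apply_symm_apply z
  refine ⟨fun a => (((N.holEquiv hN (hs a)).symm.trans (N.holEquiv hN (hw1 a))).trans
    (N.holEquiv hN (hw2 a)).symm).trans (N.holEquiv hN (hs o₀)), ?_⟩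
  intro a o h x
  simp only [StarAlgEquiv.trans_apply]
  set u : N.fib (s a) := (N.holEquiv hN (hs a)).symm x with hu
  set v : N.fib (s o) := (N.holEquiv hN (hs o)).symm (N.incl h x) with hv
  set y : N.fib (s o₀) := (N.holEquiv hN (hw2 a)).symm ((N.holEquiv hN (hw1 a)) u) with hy
  set y' : N.fib (s o₀) := (N.holEquiv hN (hw2 o)).symm ((N.holEquiv hN (hw1 o)) v) with hy'
  suffices hyy : y = y' by rw [hyy]
  have A1 : N.incl (hw2 a) y = N.incl (hw1 a) u := key (hw2 a) _
  have A2 : N.incl ((hs a).trans h) u = N.incl (hs o) v := by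
    calc N.incl ((hs a).trans h) u = N.incl h (N.incl (hs a) u) := (N.incl_comp _ _ _).symm
      _ = N.incl h x := congrArg (N.incl h) (key (hs a) x)
      _ = N.incl (hs o) v := (key (hs o) (N.incl h x)).symm
  obtain ⟨W, hW0, hWa, hWo⟩ := exists_upper3 (s o₀) (s a) (s o) (hS o₀) (hS a) (hS o)
  have T1 : N.incl hW0 y = N.incl hWa u :=
    cech_transfer N hglob (hw2 a) (hw1 a) hW0 hWa A1
  have T2 : N.incl hWa u = N.incl hWo v :=
    cech_transfer N hglob ((hs a).trans h) (hs o) hWa hWo A2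
  have T3 : N.incl (hw2 o) y = N.incl (hw1 o) v :=
    cech_transfer N hglob hW0 hWo (hw2 o) (hw1 o) (T1.trans T2)
  have A4 : N.incl (hw2 o) y' = N.incl (hw1 o) v := key (hw2 o) _
  exact N.incl_injective (hw2 o) (T3.trans A4.symm)

end AQFT
end
end
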